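/- (Theorem 1, conclusion 3, EPS difference law) Fix d ≥ 1, T > 0, μ : Fin d → ℝ, σx ≥ 0, ε : Fin d → ℝ, and measurable schedules γ, σ : ℝ → ℝ with v t := (γ t)²σx² + (σ t)² > 0 for t ∈ [0,T], and with t ↦ γ t / v t, t ↦ σ t / v t and t ↦ 1 / v t integrable on [0,T]. Let X₀, Y₀ (law Measure.pi (fun i => gaussianReal (μ i) (σx²))) and Z, Z′ (law Measure.pi (fun i => gaussianReal 0 1)) be mutually independent. Let S = (1/T)·∫₀^T (fun i => −(γ t * X₀ i + σ t * Z i − γ t * μ i)/(v t)) dt and Ŝ = (1/T)·∫₀^T (fun i => −(γ t * Y₀ i + σ t * Z′ i + ε i − γ t * μ i)/(v t)) dt. Then the law of S − Ŝ is Measure.pi (fun i => gaussianReal (c · ε i) (2(a²σx² + b²))), where a = (1/T)∫₀^T γ t/(v t) dt, b = (1/T)∫₀^T σ t/(v t) dt, c = (1/T)∫₀^T 1/(v t) dt; i.e., the difference between the EPS of a natural sample and the EPS of an independent adversarial sample is Gaussian with mean μ_S = c•ε and per-coordinate variance 2(a²σx² + b²). -/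

import Mathlib

open MeasureTheory ProbabilityTheory Real
open scoped NNReal ENNReal


lemma gaussianPDFReal_conv (m₁ m₂ : ℝ) (v₁ v₂ : ℝ≥0) (hv₁ : v₁ ≠ 0) (hv₂ : v₂ ≠ 0) (z : ℝ) :
    ∫ x, gaussianPDFReal m₁ v₁ x * gaussianPDFReal m₂ v₂ (z - x) =
      gaussianPDFReal (m₁ + m₂) (v₁ + v₂) z := by
  have hV₁ : (0:ℝ) < v₁ := lt_of_le_of_ne v₁.coe_nonneg (by exact_mod_cast (Ne.symm hv₁))
  have hV₂ : (0:ℝ) < v₂ := lt_of_le_of_ne v₂.coe_nonneg (by exact_mod_cast (Ne.symm hv₂))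
  have hπ : (0:ℝ) < π := pi_pos
  set V₁ : ℝ := (v₁ : ℝ)
  set V₂ : ℝ := (v₂ : ℝ)
  set k : ℝ := (V₁ + V₂) / (2 * V₁ * V₂) with hk
  have hkpos : 0 < k := by positivity
  set s : ℝ := (m₁ * V₂ + (z - m₂) * V₁) / (V₁ + V₂) with hs
  set C : ℝ := (√(2 * π * V₁))⁻¹ * (√(2 * π * V₂))⁻¹
      * rexp (-(z - (m₁ + m₂)) ^ 2 / (2 * (V₁ + V₂))) with hC
  have hexp : ∀ x : ℝ, -(x - m₁) ^ 2 / (2 * V₁) + -(z - x - m₂) ^ 2 / (2 * V₂)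
      = -(z - (m₁ + m₂)) ^ 2 / (2 * (V₁ + V₂)) + -k * (x - s) ^ 2 := by
    intro x
    rw [hk, hs]
    field_simp
    ring
  have key : ∀ x : ℝ,
      gaussianPDFReal m₁ v₁ x * gaussianPDFReal m₂ v₂ (z - x)
        = C * rexp (-k * (x - s) ^ 2) := by
    intro x
    simp only [gaussianPDFReal, hC]
    calc (√(2 * π * V₁))⁻¹ * rexp (-(x - m₁) ^ 2 / (2 * V₁))
          * ((√(2 * π * V₂))⁻¹ * rexp (-(z - x - m₂) ^ 2 / (2 * V₂)))
        = (√(2 * π * V₁))⁻¹ * (√(2 * π * V₂))⁻¹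
            * rexp (-(x - m₁) ^ 2 / (2 * V₁) + -(z - x - m₂) ^ 2 / (2 * V₂)) := by
          rw [Real.exp_add]; ring
      _ = _ := by rw [hexp x, Real.exp_add]; ring
  rw [integral_congr_ae (Filter.Eventually.of_forall key), integral_const_mul]
  have hsub : ∫ x : ℝ, rexp (-k * (x - s) ^ 2) = ∫ x : ℝ, rexp (-k * x ^ 2) :=
    integral_sub_right_eq_self (μ := volume) (fun x => rexp (-k * x ^ 2)) s
  rw [hsub, integral_gaussian]
  -- now constants
  simp only [gaussianPDFReal, hC]
  push_cast
  rw [← Real.sqrt_inv (2 * π * V₁), ← Real.sqrt_inv (2 * π * V₂),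
    ← Real.sqrt_mul (by positivity)]
  have hconst : √((2 * π * V₁)⁻¹ * (2 * π * V₂)⁻¹) * √(π / k)
      = (√(2 * π * (V₁ + V₂)))⁻¹ := by
    rw [← Real.sqrt_mul (show (0:ℝ) ≤ (2 * π * V₁)⁻¹ * (2 * π * V₂)⁻¹ by positivity) (π / k), ← Real.sqrt_inv]
    congr 1
    rw [hk]
    field_simp
  rw [mul_right_comm, hconst]

lemma map_add_withDensity (p q : ℝ → ℝ≥0∞) (hp : Measurable p) (hq : Measurable q) :
    Measure.map (fun r : ℝ × ℝ => r.1 + r.2)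
      ((volume.withDensity p).prod (volume.withDensity q))
    = volume.withDensity (fun z => ∫⁻ x, p x * q (z - x)) := by
  have hf : Measurable fun r : ℝ × ℝ => r.1 + r.2 := measurable_fst.add measurable_snd
  ext s hs
  rw [Measure.map_apply hf hs, withDensity_apply _ hs]
  have h1 : ((fun r : ℝ × ℝ => r.1 + r.2) ⁻¹' s).indicator (1 : ℝ × ℝ → ℝ≥0∞)
      = fun r : ℝ × ℝ => s.indicator 1 (r.1 + r.2) := by
    ext r
    by_cases h : r.1 + r.2 ∈ s <;> simp [Set.indicator, h]
  rw [← lintegral_indicator_one (hf hs), h1]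
  have hind : Measurable (s.indicator (1 : ℝ → ℝ≥0∞)) := measurable_one.indicator hs
  rw [lintegral_prod (fun r : ℝ × ℝ => s.indicator 1 (r.1 + r.2)) ((hind.comp hf).aemeasurable)]
  have h2 : ∀ x : ℝ, (∫⁻ y, s.indicator 1 (x + y) ∂(volume.withDensity q))
      = ∫⁻ z, q (z - x) * s.indicator 1 z := by
    intro x
    have hgx : Measurable (fun y : ℝ => s.indicator 1 (x + y)) :=
      hind.comp (measurable_const.add measurable_id)
    rw [lintegral_withDensity_eq_lintegral_mul _ hq hgx]
    have heq : (q * fun y => s.indicator 1 (x + y))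
        = fun y => (fun z => q (z - x) * s.indicator 1 z) (x + y) := by
      funext y
      simp [Pi.mul_apply, add_sub_cancel_left]
    rw [heq]
    exact (measurePreserving_add_left volume x).lintegral_comp
      ((hq.comp (measurable_id.sub measurable_const)).mul hind)
  simp_rw [h2]
  have hmeas : Measurable fun x : ℝ => ∫⁻ z, q (z - x) * s.indicator 1 z :=
    Measurable.lintegral_prod_right'
      (f := fun r : ℝ × ℝ => q (r.2 - r.1) * s.indicator 1 r.2)
      ((hq.comp (measurable_snd.sub measurable_fst)).mul (hind.comp measurable_snd))
  rw [lintegral_withDensity_eq_lintegral_mul _ hp hmeas]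
  simp_rw [Pi.mul_apply]
  have h3 : ∀ x : ℝ, p x * ∫⁻ z, q (z - x) * s.indicator 1 z
      = ∫⁻ z, p x * (q (z - x) * s.indicator 1 z) := fun x =>
    (lintegral_const_mul (p x)
      ((hq.comp (measurable_id.sub measurable_const)).mul hind)).symm
  rw [lintegral_congr h3]
  rw [lintegral_lintegral_swap
    (((hp.comp measurable_fst).mul
      ((hq.comp (measurable_snd.sub measurable_fst)).mul
        (hind.comp measurable_snd))).aemeasurable)]
  have h4 : ∀ z : ℝ, ∫⁻ x, p x * (q (z - x) * s.indicator 1 z)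
      = s.indicator (fun z => ∫⁻ x, p x * q (z - x)) z := by
    intro z
    by_cases hz : z ∈ s
    · simp only [Set.indicator_of_mem hz, Pi.one_apply, mul_one]
    · simp [Set.indicator_of_notMem hz]
  rw [lintegral_congr h4, lintegral_indicator hs]

lemma gaussianPDFReal_le (m : ℝ) (v : ℝ≥0) (x : ℝ) :
    gaussianPDFReal m v x ≤ (√(2 * π * v))⁻¹ := by
  rw [gaussianPDFReal]
  have h1 : rexp (-(x - m) ^ 2 / (2 * v)) ≤ 1 := by
    rw [Real.exp_le_one_iff]
    apply div_nonpos_of_nonpos_of_nonneg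
    · simp [sq_nonneg]
    · positivity
  calc (√(2 * π * v))⁻¹ * rexp (-(x - m) ^ 2 / (2 * v))
      ≤ (√(2 * π * v))⁻¹ * 1 := by
        apply mul_le_mul_of_nonneg_left h1 (by positivity)
    _ = (√(2 * π * v))⁻¹ := mul_one _

lemma gaussianReal_conv (m₁ m₂ : ℝ) (v₁ v₂ : ℝ≥0) :
    Measure.map (fun r : ℝ × ℝ => r.1 + r.2)
      ((gaussianReal m₁ v₁).prod (gaussianReal m₂ v₂))
    = gaussianReal (m₁ + m₂) (v₁ + v₂) := by
  have hf : Measurable fun r : ℝ × ℝ => r.1 + r.2 := measurable_fst.add measurable_snd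
  by_cases hv₁ : v₁ = 0
  · subst hv₁
    rw [gaussianReal_zero_var, Measure.dirac_prod, Measure.map_map hf measurable_prodMk_left]
    have : ((fun r : ℝ × ℝ => r.1 + r.2) ∘ Prod.mk m₁) = fun y : ℝ => m₁ + y := rfl
    rw [this, gaussianReal_map_const_add, add_comm m₂ m₁, zero_add]
  by_cases hv₂ : v₂ = 0
  · subst hv₂
    rw [gaussianReal_zero_var, Measure.prod_dirac,
      Measure.map_map hf measurable_prodMk_right]
    have : ((fun r : ℝ × ℝ => r.1 + r.2) ∘ fun x : ℝ => (x, m₂)) = fun x : ℝ => x + m₂ := rfl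
    rw [this, gaussianReal_map_add_const, add_zero]
  have hv : v₁ + v₂ ≠ 0 := by simp [hv₁]
  rw [gaussianReal_of_var_ne_zero _ hv₁, gaussianReal_of_var_ne_zero _ hv₂,
    gaussianReal_of_var_ne_zero _ hv,
    map_add_withDensity _ _ (measurable_gaussianPDF _ _) (measurable_gaussianPDF _ _)]
  congr 1
  funext z
  have hint : Integrable fun x => gaussianPDFReal m₁ v₁ x * gaussianPDFReal m₂ v₂ (z - x) := by
    have hmeas2 : AEStronglyMeasurable (fun x => gaussianPDFReal m₂ v₂ (z - x)) volume :=
      ((measurable_gaussianPDFReal m₂ v₂).comp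
        (measurable_const.sub measurable_id)).aestronglyMeasurable
    have := (integrable_gaussianPDFReal m₁ v₁).bdd_mul hmeas2
      (c := (√(2 * π * v₂))⁻¹) (Filter.Eventually.of_forall fun x => by
        rw [Real.norm_eq_abs, abs_of_nonneg (gaussianPDFReal_nonneg _ _ _)]
        exact gaussianPDFReal_le _ _ _)
    exact this.congr (by exact Filter.Eventually.of_forall fun x => mul_comm _ _)
  have key : ∫⁻ x, gaussianPDF m₁ v₁ x * gaussianPDF m₂ v₂ (z - x)
      = ENNReal.ofReal (∫ x, gaussianPDFReal m₁ v₁ x * gaussianPDFReal m₂ v₂ (z - x)) := by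
    rw [ofReal_integral_eq_lintegral_ofReal hint
      (Filter.Eventually.of_forall fun x =>
        mul_nonneg (gaussianPDFReal_nonneg _ _ _) (gaussianPDFReal_nonneg _ _ _))]
    congr 1
    funext x
    rw [ENNReal.ofReal_mul (gaussianPDFReal_nonneg _ _ _)]
    rfl
  rw [key, gaussianPDFReal_conv m₁ m₂ v₁ v₂ hv₁ hv₂ z]
  rfl

lemma gaussianReal_map_neg (m : ℝ) (v : ℝ≥0) :
    Measure.map (fun x : ℝ => -x) (gaussianReal m v) = gaussianReal (-m) v := by
  have h : (fun x : ℝ => -x) = fun x : ℝ => (-1 : ℝ) * x := by funext x; ring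
  rw [h, gaussianReal_map_const_mul]
  congr 1
  · ring
  · ext
    push_cast
    ring

lemma gaussianReal_map_diff (m : ℝ) (v : ℝ≥0) :
    Measure.map (fun r : ℝ × ℝ => r.2 - r.1)
      ((gaussianReal m v).prod (gaussianReal m v)) = gaussianReal 0 (v + v) := by
  have h : (fun r : ℝ × ℝ => r.2 - r.1)
      = (fun r : ℝ × ℝ => r.1 + r.2) ∘ Prod.map (fun x : ℝ => -x) (id : ℝ → ℝ) := by
    funext r
    simp [Prod.map, sub_eq_neg_add]
  rw [h, ← Measure.map_map (show Measurable (fun r : ℝ × ℝ => r.1 + r.2) from measurable_fst.add measurable_snd)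
      (measurable_neg.prodMap measurable_id),
    ← Measure.map_prod_map _ _ measurable_neg measurable_id,
    _root_.gaussianReal_map_neg, Measure.map_id, gaussianReal_conv, neg_add_cancel]

lemma coord_law (a b k m : ℝ) (V : ℝ≥0) :
    Measure.map (fun q : (ℝ × ℝ) × (ℝ × ℝ) =>
        a * (q.1.2 - q.1.1) + b * (q.2.2 - q.2.1) + k)
      (((gaussianReal m V).prod (gaussianReal m V)).prod
        ((gaussianReal 0 1).prod (gaussianReal 0 1)))
    = gaussianReal k (NNReal.mk (a ^ 2) (sq_nonneg a) * (V + V) + NNReal.mk (b ^ 2) (sq_nonneg b) * (1 + 1)) := by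
  have h1 : ∀ (c : ℝ) (m' : ℝ) (v : ℝ≥0),
      Measure.map (fun r : ℝ × ℝ => c * (r.2 - r.1))
        ((gaussianReal m' v).prod (gaussianReal m' v))
      = gaussianReal 0 (NNReal.mk (c ^ 2) (sq_nonneg c) * (v + v)) := by
    intro c m' v
    have h : (fun r : ℝ × ℝ => c * (r.2 - r.1))
        = (fun x : ℝ => c * x) ∘ (fun r : ℝ × ℝ => r.2 - r.1) := rfl
    rw [h, ← Measure.map_map (measurable_const_mul c) (show Measurable (fun r : ℝ × ℝ => r.2 - r.1) from measurable_snd.sub measurable_fst),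
      gaussianReal_map_diff, gaussianReal_map_const_mul, mul_zero]
  have hcomp : (fun q : (ℝ × ℝ) × (ℝ × ℝ) =>
        a * (q.1.2 - q.1.1) + b * (q.2.2 - q.2.1) + k)
      = (fun u : ℝ => u + k) ∘ ((fun r : ℝ × ℝ => r.1 + r.2)
          ∘ Prod.map (fun r : ℝ × ℝ => a * (r.2 - r.1)) (fun r : ℝ × ℝ => b * (r.2 - r.1))) :=
    rfl
  have hma : Measurable fun r : ℝ × ℝ => a * (r.2 - r.1) :=
    (measurable_snd.sub measurable_fst).const_mul a
  have hmb : Measurable fun r : ℝ × ℝ => b * (r.2 - r.1) :=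
    (measurable_snd.sub measurable_fst).const_mul b
  rw [hcomp, ← Measure.map_map (measurable_add_const k)
      ((show Measurable (fun r : ℝ × ℝ => r.1 + r.2) from measurable_fst.add measurable_snd).comp (hma.prodMap hmb)),
    ← Measure.map_map (show Measurable (fun r : ℝ × ℝ => r.1 + r.2) from measurable_fst.add measurable_snd) (hma.prodMap hmb),
    ← Measure.map_prod_map _ _ hma hmb, h1, h1, gaussianReal_conv, add_zero,
    gaussianReal_map_add_const, zero_add]

lemma integrable_pi' {d : ℕ} {ν : Measure ℝ} {f : ℝ → Fin d → ℝ}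
    (hf : ∀ i, Integrable (fun t => f t i) ν) : Integrable f ν := by
  have h : f = fun t => ∑ i : Fin d, (f t i) • (Pi.single i 1 : Fin d → ℝ) := by
    funext t j
    simp [Finset.sum_apply, Pi.single_apply, mul_comm]
  rw [h]
  exact integrable_finset_sum _ fun i _ => (hf i).smul_const _

lemma intervalIntegral_pi_apply {d : ℕ} {f : ℝ → Fin d → ℝ} {a b : ℝ}
    (hf : ∀ i, IntervalIntegrable (fun t => f t i) volume a b) (i : Fin d) :
    (∫ t in a..b, f t) i = ∫ t in a..b, f t i := by
  have hI : IntervalIntegrable f volume a b :=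
    ⟨integrable_pi' fun i => (hf i).1, integrable_pi' fun i => (hf i).2⟩
  have := (ContinuousLinearMap.proj (R := ℝ) (φ := fun _ : Fin d => ℝ) i).intervalIntegral_comp_comm hI
  simpa using this.symm

lemma map_piMap {d : ℕ} {α β : Type*} [MeasurableSpace α] [MeasurableSpace β]
    (μs : Fin d → Measure α) [∀ i, IsProbabilityMeasure (μs i)]
    (f : Fin d → α → β) (hf : ∀ i, Measurable (f i)) :
    Measure.map (fun x (i : Fin d) => f i (x i)) (Measure.pi μs)
    = Measure.pi (fun i => (μs i).map (f i)) := by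
  haveI : ∀ i, IsProbabilityMeasure ((μs i).map (f i)) :=
    fun i => Measure.isProbabilityMeasure_map (hf i).aemeasurable
  have hmeas : Measurable (fun (x : Fin d → α) (i : Fin d) => f i (x i)) :=
    measurable_pi_iff.2 fun i => by exact (hf i).comp (measurable_pi_apply i)
  refine (Measure.pi_eq fun s hs => ?_).symm
  rw [Measure.map_apply hmeas (MeasurableSet.univ_pi hs)]
  have h : (fun x (i : Fin d) => f i (x i)) ⁻¹' Set.univ.pi s
      = Set.univ.pi fun i => f i ⁻¹' s i := by ext x; simp
  rw [h, Measure.pi_pi]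
  exact Finset.prod_congr rfl fun i _ => (Measure.map_apply (hf i) (hs i)).symm


/-- Theorem 1, conclusion 3, EPS difference law: for mutually independent
`X₀, Y₀ ~ N(μ, σx²·I)` and `Z, Z′ ~ N(0, I)`, the difference `S − Ŝ` between the EPS of
a natural sample and the EPS of an independent adversarial sample is Gaussian with mean
`c•ε` and per-coordinate variance `2(a²σx² + b²)`, where `a = (1/T)∫₀ᵀ γ t/(v t) dt`,
`b = (1/T)∫₀ᵀ σ t/(v t) dt`, `c = (1/T)∫₀ᵀ 1/(v t) dt`. -/
theorem eps_difference_law (d : ℕ) (hd : 1 ≤ d) (T : ℝ) (hT : 0 < T) (μ : Fin d → ℝ)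
    (σx : ℝ) (hσx : 0 ≤ σx) (ε : Fin d → ℝ) (γ σ : ℝ → ℝ) (hγ : Measurable γ)
    (hσ : Measurable σ) (v : ℝ → ℝ) (hv : ∀ t, v t = (γ t) ^ 2 * σx ^ 2 + (σ t) ^ 2)
    (hvpos : ∀ t ∈ Set.Icc (0 : ℝ) T, 0 < v t)
    (hint1 : IntervalIntegrable (fun t => γ t / v t) volume 0 T)
    (hint2 : IntervalIntegrable (fun t => σ t / v t) volume 0 T)
    (hint3 : IntervalIntegrable (fun t => 1 / v t) volume 0 T) :
    Measure.map
      (fun p : ((Fin d → ℝ) × (Fin d → ℝ)) × ((Fin d → ℝ) × (Fin d → ℝ)) =>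
        ((1 / T) • ∫ t in (0 : ℝ)..T,
            (fun i => -(γ t * p.1.1 i + σ t * p.2.1 i - γ t * μ i) / v t))
        - ((1 / T) • ∫ t in (0 : ℝ)..T,
            (fun i => -(γ t * p.1.2 i + σ t * p.2.2 i + ε i - γ t * μ i) / v t)))
      (((Measure.pi fun i => gaussianReal (μ i) ((σx ^ 2).toNNReal)).prod
          (Measure.pi fun i => gaussianReal (μ i) ((σx ^ 2).toNNReal))).prod
        ((Measure.pi fun _ => gaussianReal 0 1).prod
          (Measure.pi fun _ => gaussianReal 0 1)))
    = Measure.pi fun i => gaussianReal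
        (((1 / T) * ∫ t in (0 : ℝ)..T, 1 / v t) * ε i)
        ((2 * (((1 / T) * ∫ t in (0 : ℝ)..T, γ t / v t) ^ 2 * σx ^ 2
          + ((1 / T) * ∫ t in (0 : ℝ)..T, σ t / v t) ^ 2)).toNNReal) := by
  set A : ℝ := ∫ t in (0:ℝ)..T, γ t / v t with hA
  set B : ℝ := ∫ t in (0:ℝ)..T, σ t / v t with hB
  set Cc : ℝ := ∫ t in (0:ℝ)..T, 1 / v t with hCc
  set a : ℝ := (1 / T) * A with ha
  set b : ℝ := (1 / T) * B with hb
  set c : ℝ := (1 / T) * Cc with hc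
  -- per-coordinate integral computations
  have key1 : ∀ x z m : ℝ,
      IntervalIntegrable (fun t => -(γ t * x + σ t * z - γ t * m) / v t) volume 0 T ∧
      (∫ t in (0:ℝ)..T, -(γ t * x + σ t * z - γ t * m) / v t)
        = (m - x) * A + (-z) * B := by
    intro x z m
    have heq : (fun t => -(γ t * x + σ t * z - γ t * m) / v t)
        = fun t => (m - x) * (γ t / v t) + (-z) * (σ t / v t) := by
      funext t; ring
    constructor
    · rw [heq]; exact (hint1.const_mul _).add (hint2.const_mul _)
    · rw [heq, intervalIntegral.integral_add (hint1.const_mul _) (hint2.const_mul _),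
        intervalIntegral.integral_const_mul, intervalIntegral.integral_const_mul]
  have key2 : ∀ x z e m : ℝ,
      IntervalIntegrable (fun t => -(γ t * x + σ t * z + e - γ t * m) / v t) volume 0 T ∧
      (∫ t in (0:ℝ)..T, -(γ t * x + σ t * z + e - γ t * m) / v t)
        = ((m - x) * A + (-z) * B) + (-e) * Cc := by
    intro x z e m
    have heq : (fun t => -(γ t * x + σ t * z + e - γ t * m) / v t)
        = fun t => ((m - x) * (γ t / v t) + (-z) * (σ t / v t)) + (-e) * (1 / v t) := by
      funext t; ring
    constructor
    · rw [heq]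
      exact ((hint1.const_mul _).add (hint2.const_mul _)).add (hint3.const_mul _)
    · rw [heq, intervalIntegral.integral_add
          ((hint1.const_mul _).add (hint2.const_mul _)) (hint3.const_mul _),
        intervalIntegral.integral_add (hint1.const_mul _) (hint2.const_mul _),
        intervalIntegral.integral_const_mul, intervalIntegral.integral_const_mul,
        intervalIntegral.integral_const_mul]
  -- simplify the mapped function
  have hfun : (fun p : ((Fin d → ℝ) × (Fin d → ℝ)) × ((Fin d → ℝ) × (Fin d → ℝ)) =>
        ((1 / T) • ∫ t in (0 : ℝ)..T,
            (fun i => -(γ t * p.1.1 i + σ t * p.2.1 i - γ t * μ i) / v t))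
        - ((1 / T) • ∫ t in (0 : ℝ)..T,
            (fun i => -(γ t * p.1.2 i + σ t * p.2.2 i + ε i - γ t * μ i) / v t)))
      = fun p => fun i : Fin d =>
          a * (p.1.2 i - p.1.1 i) + b * (p.2.2 i - p.2.1 i) + c * ε i := by
    funext p
    funext i
    simp only [Pi.sub_apply, Pi.smul_apply, smul_eq_mul]
    rw [intervalIntegral_pi_apply (fun j => (key1 (p.1.1 j) (p.2.1 j) (μ j)).1) i,
      intervalIntegral_pi_apply (fun j => (key2 (p.1.2 j) (p.2.2 j) (ε j) (μ j)).1) i,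
      (key1 (p.1.1 i) (p.2.1 i) (μ i)).2, (key2 (p.1.2 i) (p.2.2 i) (ε i) (μ i)).2,
      ha, hb, hc]
    ring
  rw [hfun]
  -- rearrange the measure as a pi measure over coordinates
  set V : ℝ≥0 := (σx ^ 2).toNNReal with hV
  set G : Fin d → Measure ℝ := fun i => gaussianReal (μ i) V with hG
  set N : Measure ℝ := gaussianReal 0 1 with hN
  set e₀ : (Fin d → ℝ × ℝ) ≃ᵐ (Fin d → ℝ) × (Fin d → ℝ) :=
    MeasurableEquiv.arrowProdEquivProdArrow ℝ ℝ (Fin d) with he₀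
  set e₂ : (Fin d → (ℝ × ℝ) × (ℝ × ℝ)) ≃ᵐ (Fin d → ℝ × ℝ) × (Fin d → ℝ × ℝ) :=
    MeasurableEquiv.arrowProdEquivProdArrow (ℝ × ℝ) (ℝ × ℝ) (Fin d) with he₂
  have hEP : MeasurePreserving (Prod.map e₀ e₀ ∘ e₂)
      (Measure.pi fun i => ((G i).prod (G i)).prod (N.prod N))
      (((Measure.pi fun i => G i).prod (Measure.pi fun i => G i)).prod
        ((Measure.pi fun _ => N).prod (Measure.pi fun _ => N))) := by
    have h2 := MeasureTheory.measurePreserving_arrowProdEquivProdArrow (ℝ × ℝ) (ℝ × ℝ) (Fin d)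
      (fun i => (G i).prod (G i)) (fun _ => N.prod N)
    have h0a := MeasureTheory.measurePreserving_arrowProdEquivProdArrow ℝ ℝ (Fin d) G G
    have h0b := MeasureTheory.measurePreserving_arrowProdEquivProdArrow ℝ ℝ (Fin d)
      (fun _ => N) (fun _ => N)
    exact (h0a.prod h0b).comp h2
  set g : Fin d → ((ℝ × ℝ) × (ℝ × ℝ)) → ℝ := fun i q =>
    a * (q.1.2 - q.1.1) + b * (q.2.2 - q.2.1) + c * ε i with hg
  have hgm : ∀ i, Measurable (g i) := by
    intro i
    rw [hg]
    fun_prop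
  have hFm : Measurable (fun p : ((Fin d → ℝ) × (Fin d → ℝ)) × ((Fin d → ℝ) × (Fin d → ℝ)) =>
      fun i : Fin d => a * (p.1.2 i - p.1.1 i) + b * (p.2.2 i - p.2.1 i) + c * ε i) := by
    apply measurable_pi_iff.2
    intro i
    fun_prop
  rw [← hEP.map_eq, Measure.map_map hFm (hEP.measurable)]
  have hcomp : ((fun p : ((Fin d → ℝ) × (Fin d → ℝ)) × ((Fin d → ℝ) × (Fin d → ℝ)) =>
        fun i : Fin d => a * (p.1.2 i - p.1.1 i) + b * (p.2.2 i - p.2.1 i) + c * ε i)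
      ∘ (Prod.map e₀ e₀ ∘ e₂))
      = fun (x : Fin d → (ℝ × ℝ) × (ℝ × ℝ)) (i : Fin d) => g i (x i) := rfl
  rw [hcomp]
  haveI : ∀ i : Fin d, IsProbabilityMeasure (((G i).prod (G i)).prod (N.prod N)) := by
    intro i
    infer_instance
  rw [map_piMap (fun i => ((G i).prod (G i)).prod (N.prod N)) g hgm]
  refine congrArg Measure.pi (funext fun i => ?_)
  rw [hG]
  have := coord_law a b (c * ε i) (μ i) V
  rw [this]
  congr 1
  rw [hV]
  apply NNReal.coe_injective
  push_cast [NNReal.coe_mul, NNReal.coe_mk, Real.coe_toNNReal _ (by positivity : (0:ℝ) ≤ σx ^ 2),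
    Real.coe_toNNReal _ (by positivity : (0:ℝ) ≤ 2 * (a ^ 2 * σx ^ 2 + b ^ 2))]
  ring
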